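/- Let a > −1 and 0 < M < 1/2. Then lim_{z→∞} z^{M − 1/2} F((a+1)/2, 3/2 − M; (a+3)/2; ((z−1)/(z+1))²) = 2^{2M−1} (1+a)/(1 − 2M). -/

import Mathlib

open Real Filter

open MeasureTheory


lemma summable_aux {y : ℝ} (hy : |y| < 1) (d : ℕ → ℝ) (C : ℝ)
    (hd : ∀ n, |d n| ≤ C * (n + 1) ^ 2) : Summable fun n => d n * y ^ n := by
  have hy' : ‖|y|‖ < 1 := by rwa [Real.norm_eq_abs, abs_abs]
  have h0 : Summable fun n : ℕ => |y| ^ n :=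
    summable_geometric_of_lt_one (abs_nonneg y) hy
  have h1 : Summable fun n : ℕ => (n : ℝ) ^ 1 * |y| ^ n :=
    summable_pow_mul_geometric_of_norm_lt_one 1 hy'
  have h2 : Summable fun n : ℕ => (n : ℝ) ^ 2 * |y| ^ n :=
    summable_pow_mul_geometric_of_norm_lt_one 2 hy'
  have hsum : Summable fun n : ℕ => C * (((n : ℝ) ^ 2 * |y| ^ n + 2 * ((n:ℝ) ^ 1 * |y| ^ n)) + |y| ^ n) :=
    (Summable.add (h2.add (h1.mul_left 2)) h0).mul_left C
  apply Summable.of_norm_bounded hsum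
  intro n
  have : ‖d n * y ^ n‖ = |d n| * |y| ^ n := by
    rw [norm_mul, Real.norm_eq_abs, Real.norm_eq_abs, abs_pow]
  rw [this]
  have hb := mul_le_mul_of_nonneg_right (hd n) (pow_nonneg (abs_nonneg y) n)
  refine hb.trans (le_of_eq ?_)
  ring

lemma hasDerivAt_series (c : ℕ → ℝ) (hc : ∀ n, |c n| ≤ n + 1) {y : ℝ} (hy : |y| < 1) :
    HasDerivAt (fun x => ∑' n, c n * x ^ n) (∑' n, c n * (n * y ^ (n - 1))) y := by
  set r : ℝ := (1 + |y|) / 2 with hr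
  have hr0 : 0 < r := by positivity
  have hyr : |y| < r := by rw [hr]; linarith
  have hr1 : r < 1 := by rw [hr]; linarith
  have hrh : (1:ℝ)/2 ≤ r := by rw [hr]; linarith [abs_nonneg y]
  have hu : Summable fun n : ℕ => ((n:ℝ) + 1) * ((n + 1) * r ^ (n - 1)) := by
    have hr' : ‖r‖ < 1 := by rwa [Real.norm_eq_abs, abs_of_pos hr0]
    have h0 : Summable fun n : ℕ => r ^ n := summable_geometric_of_lt_one hr0.le hr1
    have h1 : Summable fun n : ℕ => (n : ℝ) ^ 1 * r ^ n :=
      summable_pow_mul_geometric_of_norm_lt_one 1 hr'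
    have h2 : Summable fun n : ℕ => (n : ℝ) ^ 2 * r ^ n :=
      summable_pow_mul_geometric_of_norm_lt_one 2 hr'
    have hsum : Summable fun n : ℕ =>
        (1/r) * (((n : ℝ) ^ 2 * r ^ n + 2 * ((n:ℝ) ^ 1 * r ^ n)) + r ^ n) :=
      (Summable.add (h2.add (h1.mul_left 2)) h0).mul_left _
    apply Summable.of_nonneg_of_le _ _ hsum
    · intro n; positivity
    · intro n
      have hrp : r ^ (n - 1) ≤ r ^ n / r := by
        cases n with
        | zero => simp only [Nat.zero_sub, pow_zero, pow_zero]; rw [le_div_iff₀ hr0]; nlinarith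
        | succ m => simp only [Nat.add_sub_cancel, pow_succ]; rw [mul_div_assoc, div_self hr0.ne', mul_one]
      calc ((n:ℝ) + 1) * ((n + 1) * r ^ (n - 1)) ≤ ((n:ℝ)+1) * ((n+1) * (r ^ n / r)) := by
            apply mul_le_mul_of_nonneg_left (mul_le_mul_of_nonneg_left hrp (by positivity)) (by positivity)
        _ = (1/r) * (((n : ℝ) ^ 2 * r ^ n + 2 * ((n:ℝ) ^ 1 * r ^ n)) + r ^ n) := by
            field_simp; ring
  have := hasDerivAt_tsum_of_isPreconnected hu (Metric.isOpen_ball (x := (0:ℝ)) (ε := r))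
    ((convex_ball (0:ℝ) r).isPreconnected)
    (g := fun n x => c n * x ^ n) (g' := fun n x => c n * (n * x ^ (n - 1)))
    (fun n x _ => (hasDerivAt_pow n x).const_mul (c n))
    (fun n x hx => ?_) (y₀ := 0) (by simp [Metric.mem_ball, hr0])
    ?_ (by simpa [Metric.mem_ball] using hyr)
  · exact this
  · have hxr : |x| < r := by simpa [Metric.mem_ball] using hx
    have hxr' : |x| ≤ r := hxr.le
    have : ‖c n * (↑n * x ^ (n - 1))‖ ≤ ((n:ℝ)+1) * ((n:ℝ) * |x| ^ (n-1)) := by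
      rw [norm_mul, Real.norm_eq_abs, Real.norm_eq_abs, abs_mul, abs_pow, Nat.abs_cast]
      exact mul_le_mul_of_nonneg_right (hc n) (by positivity)
    refine this.trans ?_
    have hp : |x| ^ (n-1) ≤ r ^ (n-1) := pow_le_pow_left₀ (abs_nonneg x) hxr' _
    have hn : (n:ℝ) ≤ (n:ℝ) + 1 := by linarith
    have : (n:ℝ) * |x| ^ (n-1) ≤ ((n:ℝ)+1) * r ^ (n-1) := by
      apply mul_le_mul hn hp (by positivity) (by positivity)
    exact mul_le_mul_of_nonneg_left this (by positivity)
  · apply summable_of_ne_finset_zero (s := {0})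
    intro n hn
    simp only [Finset.mem_singleton] at hn
    simp [zero_pow hn]

noncomputable def bc (b : ℝ) (n : ℕ) : ℝ := ∏ k ∈ Finset.range n, (b + k) / (k + 1)

lemma bc_zero (b : ℝ) : bc b 0 = 1 := by simp [bc]

lemma bc_succ (b : ℝ) (n : ℕ) : bc b (n + 1) = bc b n * ((b + n) / (n + 1)) := by
  rw [bc, Finset.prod_range_succ]; rfl

lemma bc_nonneg {b : ℝ} (hb : 0 ≤ b) (n : ℕ) : 0 ≤ bc b n := by
  apply Finset.prod_nonneg; intro k _; positivity

lemma bc_le {b : ℝ} (hb0 : 0 ≤ b) (hb : b ≤ 2) (n : ℕ) : bc b n ≤ n + 1 := by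
  induction n with
  | zero => simp [bc_zero]
  | succ m ih =>
    rw [bc_succ]
    push_cast
    have h1 : (b + m) / (m + 1) ≤ (m + 2) / (m + 1) :=
      div_le_div_of_nonneg_right (by linarith) (by positivity) |>.trans_eq rfl
    calc bc b m * ((b + m) / (m + 1)) ≤ (m + 1) * ((m + 2) / (m + 1)) := by
          apply mul_le_mul ih h1 (by positivity) (by positivity)
      _ = m + 2 := by field_simp
      _ = (m : ℝ) + 1 + 1 := by ring

lemma bc_abs_le {b : ℝ} (hb0 : 0 ≤ b) (hb : b ≤ 2) (n : ℕ) : |bc b n| ≤ n + 1 := by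
  rw [abs_of_nonneg (bc_nonneg hb0 n)]; exact bc_le hb0 hb n

lemma ode_identity {b : ℝ} (hb0 : 0 ≤ b) (hb : b ≤ 2) {y : ℝ} (hy : |y| < 1) :
    (1 - y) * (∑' n, bc b n * (n * y ^ (n - 1))) = b * ∑' n, bc b n * y ^ n := by
  set S := ∑' n, bc b n * y ^ n with hS
  set D := ∑' n, bc b n * ((n : ℝ) * y ^ (n - 1)) with hD
  have habs := bc_abs_le hb0 hb
  -- summabilities
  have sum1 : Summable fun n : ℕ => bc b (n + 1) * ((n : ℝ) + 1) * y ^ n := by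
    apply summable_aux hy _ 2
    intro n
    rw [abs_mul]
    have h1 : |bc b (n+1)| ≤ (n:ℝ) + 2 := by
      have := habs (n+1); push_cast at this; linarith
    have h2 : |(n:ℝ)+1| = (n:ℝ)+1 := abs_of_nonneg (by positivity)
    rw [h2]
    nlinarith [abs_nonneg (bc b (n+1)), Nat.cast_nonneg (α := ℝ) n]
  have sumD : Summable fun n : ℕ => bc b n * ((n : ℝ) * y ^ (n - 1)) := by
    rw [← summable_nat_add_iff 1]
    apply sum1.congr
    intro n
    simp only [Nat.add_sub_cancel, Nat.cast_add_one]
    ring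
  have sumS : Summable fun n : ℕ => bc b n * y ^ n := by
    apply summable_aux hy _ 2
    intro n
    calc |bc b n| ≤ (n:ℝ) + 1 := habs n
      _ ≤ 2 * ((n:ℝ)+1)^2 := by nlinarith [Nat.cast_nonneg (α := ℝ) n]
  have sumNS : Summable fun n : ℕ => (n : ℝ) * bc b n * y ^ n := by
    apply summable_aux hy _ 2
    intro n
    rw [abs_mul, Nat.abs_cast]
    calc (n:ℝ) * |bc b n| ≤ ((n:ℝ)+1) * ((n:ℝ)+1) := by
          apply mul_le_mul (by linarith) (habs n) (abs_nonneg _) (by positivity)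
      _ ≤ 2 * ((n:ℝ)+1)^2 := by nlinarith [Nat.cast_nonneg (α := ℝ) n]
  -- shift D
  have hshift : ∀ n : ℕ, bc b (n+1) * (((n:ℕ)+1 : ℕ) : ℝ) = (b + n) * bc b n := by
    intro n
    rw [bc_succ]
    have : ((n:ℝ) + 1) ≠ 0 := by positivity
    push_cast
    field_simp
  have hD1 : D = ∑' n : ℕ, (b + n) * bc b n * y ^ n := by
    rw [hD, sumD.tsum_eq_zero_add]
    simp only [Nat.cast_zero, zero_mul, mul_zero, zero_add, Nat.add_sub_cancel]
    apply tsum_congr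
    intro n
    have := hshift n
    push_cast at this ⊢
    linear_combination y ^ n * this
  have hyD : ∑' n : ℕ, (n:ℝ) * bc b n * y ^ n = y * D := by
    rw [sumNS.tsum_eq_zero_add]
    simp only [Nat.cast_zero, zero_mul, zero_add]
    have : ∀ n : ℕ, (↑(n+1) : ℝ) * bc b (n+1) * y ^ (n+1) = y * ((b + n) * bc b n * y ^ n) := by
      intro n
      have := hshift n
      push_cast at this ⊢
      linear_combination (y ^ (n+1) : ℝ) * this + 0
    calc ∑' n : ℕ, (↑(n+1) : ℝ) * bc b (n+1) * y ^ (n+1)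
        = ∑' n : ℕ, y * ((b + n) * bc b n * y ^ n) := tsum_congr this
      _ = y * ∑' n : ℕ, (b + ↑n) * bc b n * y ^ n := tsum_mul_left
      _ = y * D := by rw [← hD1]
  have hsplit : ∑' n : ℕ, (b + ↑n) * bc b n * y ^ n
      = b * S + ∑' n : ℕ, (n:ℝ) * bc b n * y ^ n := by
    have h1 : ∑' n : ℕ, (b + ↑n) * bc b n * y ^ n
        = ∑' n : ℕ, (b * (bc b n * y ^ n) + (n:ℝ) * bc b n * y ^ n) :=
      tsum_congr fun n => by ring
    rw [h1, (sumS.mul_left b).tsum_add sumNS, tsum_mul_left]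
  have hkey : D = b * S + y * D := by
    calc D = ∑' n : ℕ, (b + ↑n) * bc b n * y ^ n := hD1
      _ = b * S + ∑' n : ℕ, (n:ℝ) * bc b n * y ^ n := hsplit
      _ = b * S + y * D := by rw [hyD]
  show (1 - y) * D = b * S
  linarith [hkey]

lemma binom {b : ℝ} (hb1 : 1 ≤ b) (hb : b ≤ 2) {x : ℝ} (hx0 : 0 ≤ x) (hx1 : x < 1) :
    ∑' n, bc b n * x ^ n = (1 - x) ^ (-b) := by
  have hb0 : (0:ℝ) ≤ b := le_trans zero_le_one hb1
  set S : ℝ → ℝ := fun y => ∑' n, bc b n * y ^ n with hSdef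
  set φ : ℝ → ℝ := fun y => (1 - y) ^ b * S y with hφdef
  have hderiv : ∀ y ∈ Set.Icc (0:ℝ) x, HasDerivAt φ 0 y := by
    intro y hy
    obtain ⟨hy0, hyx⟩ := hy
    have hy1 : |y| < 1 := by rw [abs_of_nonneg hy0]; linarith
    have h1y : (0:ℝ) < 1 - y := by linarith [lt_of_le_of_lt hyx hx1]
    have hS := hasDerivAt_series (bc b) (bc_abs_le hb0 hb) hy1
    have hpow : HasDerivAt (fun y : ℝ => (1 - y) ^ b) (-1 * b * (1-y) ^ (b-1)) y := by
      have := ((hasDerivAt_id y).const_sub 1).rpow_const (p := b) (Or.inl h1y.ne')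
      simpa using this
    have hmul := hpow.mul hS
    have hode := ode_identity hb0 hb hy1
    have hbb : (1-y)^b = (1-y)^(b-1) * (1-y) := by
      rw [← Real.rpow_add_one h1y.ne' (b-1)]
      ring_nf
    refine hmul.congr_deriv ?_
    rw [hbb]
    linear_combination ((1 - y) ^ (b - 1)) * hode
  have hcont : ContinuousOn φ (Set.Icc 0 x) :=
    fun y hy => (hderiv y hy).continuousAt.continuousWithinAt
  have hconst := constant_of_has_deriv_right_zero hcont
    (fun y hy => (hderiv y (Set.mem_Icc_of_Ico hy)).hasDerivWithinAt)
    x (Set.right_mem_Icc.mpr hx0)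
  have hφ0 : φ 0 = 1 := by
    have hS0 : S 0 = 1 := by
      rw [hSdef]
      simp only
      rw [tsum_eq_single 0 (fun n hn => by simp [zero_pow hn])]
      simp [bc_zero]
    simp [hφdef, hS0]
  rw [hφ0] at hconst
  have h1x : (0:ℝ) < 1 - x := by linarith
  have hpos : (0:ℝ) < (1-x)^b := rpow_pos_of_pos h1x b
  have : (1-x)^b * S x = 1 := hconst
  rw [Real.rpow_neg h1x.le]
  exact eq_inv_of_mul_eq_one_left (by rw [mul_comm] at this; exact this)

lemma coeff_eq {α b : ℝ} (hα : 0 < α) (n : ℕ) :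
    ∏ k ∈ Finset.range n, ((α + k) * (b + k) / ((α + 1 + k) * (k + 1)))
      = (α / (α + n)) * bc b n := by
  induction n with
  | zero => simp [bc_zero, div_self hα.ne']
  | succ m ih =>
    rw [Finset.prod_range_succ, ih, bc_succ]
    have h1 : (0:ℝ) < α + m := by positivity
    have h2 : (0:ℝ) < α + m + 1 := by positivity
    have h3 : (0:ℝ) < (m:ℝ) + 1 := by positivity
    have h4 : (0:ℝ) < α + (m+1:ℕ) := by push_cast; linarith
    push_cast at *
    field_simp
    ring

lemma series_eq_integral {α b : ℝ} (hα : 0 < α) (hb0 : 0 ≤ b) (hb2 : b ≤ 2)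
    {x : ℝ} (hx0 : 0 < x) (hx1 : x < 1) :
    x ^ α * ∑' n : ℕ, (α / (α + n)) * bc b n * x ^ n
      = α * ∫ t in Set.Ioc (0:ℝ) x, t ^ (α - 1) * ∑' n : ℕ, bc b n * t ^ n := by
  have hmeas : ∀ n : ℕ, AEStronglyMeasurable (fun t : ℝ => bc b n * t ^ (α - 1 + n))
      (volume.restrict (Set.Ioc (0:ℝ) x)) := by
    intro n
    apply Measurable.aestronglyMeasurable
    apply Measurable.const_mul
    measurability
  have hIval : ∀ n : ℕ, ∫ t in Set.Ioc (0:ℝ) x, t ^ (α - 1 + n) = x ^ (α + n) / (α + n) := by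
    intro n
    rw [← intervalIntegral.integral_of_le hx0.le]
    rw [integral_rpow (Or.inl (by push_cast; linarith [Nat.cast_nonneg (α := ℝ) n] : (-1:ℝ) < α - 1 + n))]
    have he : α - 1 + (n:ℝ) + 1 = α + n := by ring
    rw [he, Real.zero_rpow (by positivity)]
    ring
  have hIpos : ∀ n : ℕ, 0 ≤ bc b n * (x ^ (α + n) / (α + n)) := by
    intro n
    have := bc_nonneg hb0 n
    positivity
  have hInt : ∀ n : ℕ, IntegrableOn (fun t : ℝ => bc b n * t ^ (α - 1 + n)) (Set.Ioc 0 x) := by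
    intro n
    have h : IntervalIntegrable (fun t : ℝ => t ^ (α - 1 + ↑n)) volume 0 x :=
      intervalIntegral.intervalIntegrable_rpow' (by push_cast; linarith [Nat.cast_nonneg (α := ℝ) n])
    exact ((intervalIntegrable_iff_integrableOn_Ioc_of_le hx0.le).mp h).const_mul _
  have hIint : ∀ n : ℕ, ∫ t in Set.Ioc (0:ℝ) x, bc b n * t ^ (α - 1 + n)
      = bc b n * (x ^ (α + n) / (α + n)) := by
    intro n
    rw [MeasureTheory.integral_const_mul, hIval n]
  have hsumI : Summable fun n : ℕ => bc b n * (x ^ (α + n) / (α + n)) := by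
    have hx' : |x| < 1 := by rw [abs_of_pos hx0]; exact hx1
    have : ∀ n : ℕ, bc b n * (x ^ (α + n) / (α + n)) = (bc b n * x ^ α / (α + n)) * x ^ n := by
      intro n
      rw [Real.rpow_add hx0, Real.rpow_natCast]
      ring
    apply Summable.congr _ (fun n => (this n).symm)
    apply summable_aux hx' _ (x ^ α * (2 / α))
    intro n
    have hbn := bc_nonneg hb0 n
    have hble := bc_le hb0 hb2 n
    have hxa : (0:ℝ) < x ^ α := rpow_pos_of_pos hx0 α
    have hαn : (0:ℝ) < α + n := by positivity
    rw [abs_of_nonneg (div_nonneg (mul_nonneg hbn hxa.le) hαn.le)]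
    calc bc b n * x ^ α / (α + n) ≤ ((n:ℝ)+1) * x ^ α / α := by
          apply div_le_div₀ (by positivity) (mul_le_mul_of_nonneg_right hble hxa.le) hα
          linarith [Nat.cast_nonneg (α := ℝ) n]
      _ ≤ x ^ α * (2/α) * ((n:ℝ)+1)^2 := by
          rw [div_le_iff₀ hα]
          have h1 : ((n:ℝ)+1) ≤ 2*((n:ℝ)+1)^2 := by nlinarith [Nat.cast_nonneg (α := ℝ) n]
          calc ((n:ℝ)+1) * x ^ α ≤ (2*((n:ℝ)+1)^2) * x ^ α :=
                mul_le_mul_of_nonneg_right h1 hxa.le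
            _ = x ^ α * (2/α) * ((n:ℝ)+1)^2 * α := by field_simp
  have hcongr : Set.EqOn (fun t : ℝ => t ^ (α-1) * ∑' n : ℕ, bc b n * t ^ n)
      (fun t : ℝ => ∑' n : ℕ, bc b n * t ^ (α - 1 + ↑n)) (Set.Ioc 0 x) := by
    intro t ht
    simp only
    rw [← tsum_mul_left]
    apply tsum_congr; intro n
    rw [Real.rpow_add ht.1, Real.rpow_natCast]; ring
  have hlint : ∑' n : ℕ, ∫⁻ t in Set.Ioc (0:ℝ) x, ‖bc b n * t ^ (α-1+↑n)‖₊ ≠ ⊤ := by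
    have heq : ∀ n : ℕ, ∫⁻ t in Set.Ioc (0:ℝ) x, (‖bc b n * t ^ (α-1+↑n)‖₊ : ENNReal)
        = ENNReal.ofReal (bc b n * (x ^ (α+↑n)/(α+↑n))) := by
      intro n
      have hnn : 0 ≤ᶠ[ae (volume.restrict (Set.Ioc (0:ℝ) x))]
          fun t : ℝ => bc b n * t ^ (α-1+↑n) := by
        filter_upwards [self_mem_ae_restrict measurableSet_Ioc] with t ht
        exact mul_nonneg (bc_nonneg hb0 n) (rpow_nonneg ht.1.le _)
      rw [← hIint n, ofReal_integral_eq_lintegral_ofReal (hInt n) hnn]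
      apply lintegral_congr_ae
      filter_upwards [self_mem_ae_restrict measurableSet_Ioc] with t ht
      show ‖bc b n * t ^ (α-1+↑n)‖ₑ = _
      rw [Real.enorm_eq_ofReal (mul_nonneg (bc_nonneg hb0 n) (rpow_nonneg ht.1.le _))]
    rw [tsum_congr heq, ← ENNReal.ofReal_tsum_of_nonneg hIpos hsumI]
    exact ENNReal.ofReal_ne_top
  have hswap := MeasureTheory.integral_tsum hmeas hlint
  calc x ^ α * ∑' n : ℕ, (α / (α + n)) * bc b n * x ^ n
      = ∑' n : ℕ, α * (bc b n * (x ^ (α+↑n)/(α+↑n))) := by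
        rw [← tsum_mul_left]
        apply tsum_congr; intro n
        rw [Real.rpow_add hx0, Real.rpow_natCast]
        have hαn : (0:ℝ) < α + n := by positivity
        field_simp
    _ = α * ∑' n : ℕ, (bc b n * (x ^ (α+↑n)/(α+↑n))) := tsum_mul_left
    _ = α * ∑' n : ℕ, ∫ t in Set.Ioc (0:ℝ) x, bc b n * t ^ (α-1+↑n) := by
        rw [tsum_congr hIint]
    _ = α * ∫ t in Set.Ioc (0:ℝ) x, ∑' n : ℕ, bc b n * t ^ (α-1+↑n) := by rw [hswap]
    _ = α * ∫ t in Set.Ioc (0:ℝ) x, t ^ (α-1) * ∑' n : ℕ, bc b n * t ^ n := by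
        rw [MeasureTheory.setIntegral_congr_fun measurableSet_Ioc hcongr]

lemma h_integrable {α b : ℝ} (hα : 0 < α) (hb1 : 1 < b) (hb2 : b < 2) :
    IntegrableOn (fun t : ℝ => (t ^ (α-1) - 1) * (1-t) ^ (-b)) (Set.Icc 0 1) := by
  have hmeas : Measurable (fun t : ℝ => (t ^ (α-1) - 1) * (1-t) ^ (-b)) := by
    have m1 : Measurable fun t : ℝ => t ^ (α-1) := by measurability
    have msub : Measurable fun t : ℝ => (1:ℝ) - t := measurable_const.sub measurable_id
    have m2 : Measurable fun t : ℝ => (1-t) ^ (-b) :=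
      (by measurability : Measurable fun u : ℝ => u ^ (-b)).comp msub
    exact (m1.sub measurable_const).mul m2
  have hunion : Set.Icc (0:ℝ) 1 = Set.Icc 0 (1/2) ∪ Set.Icc (1/2) 1 := by
    rw [Set.Icc_union_Icc_eq_Icc] <;> norm_num
  rw [hunion]
  apply MeasureTheory.IntegrableOn.union
  · -- on [0, 1/2]
    have hmaj : IntegrableOn (fun t : ℝ => (t ^ (α-1) + 1) * 2 ^ b) (Set.Icc 0 (1/2)) := by
      rw [integrableOn_Icc_iff_integrableOn_Ioc]
      have h1 : IntervalIntegrable (fun t : ℝ => t ^ (α-1)) volume 0 (1/2) :=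
        intervalIntegral.intervalIntegrable_rpow' (by linarith)
      have h2 : IntervalIntegrable (fun t : ℝ => t ^ (α-1) + 1) volume 0 (1/2) :=
        h1.add intervalIntegrable_const
      have := ((intervalIntegrable_iff_integrableOn_Ioc_of_le (by norm_num : (0:ℝ) ≤ 1/2)).mp h2)
      exact this.mul_const _
    apply hmaj.integrable.mono hmeas.aestronglyMeasurable
    rw [ae_restrict_iff' measurableSet_Icc]
    apply Filter.Eventually.of_forall
    intro t ht
    have ht0 := ht.1
    have ht2 := ht.2
    have hta : (0:ℝ) ≤ t ^ (α-1) := rpow_nonneg ht0 _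
    have h1t : (1:ℝ)/2 ≤ 1 - t := by linarith
    have hpow : (1-t) ^ (-b) ≤ 2 ^ b := by
      have := rpow_le_rpow_of_nonpos (by norm_num : (0:ℝ) < 1/2) h1t (by linarith : -b ≤ 0)
      refine this.trans (le_of_eq ?_)
      rw [one_div, Real.inv_rpow (by norm_num : (0:ℝ) ≤ 2), ← Real.rpow_neg (by norm_num : (0:ℝ) ≤ 2), neg_neg]
    have hpow0 : (0:ℝ) ≤ (1-t) ^ (-b) := rpow_nonneg (by linarith) _
    rw [Real.norm_eq_abs, Real.norm_eq_abs, abs_mul, abs_of_nonneg hpow0]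
    have habs1 : |t ^ (α-1) - 1| ≤ t ^ (α-1) + 1 := by
      apply (abs_sub _ _).trans; simp [abs_of_nonneg hta]
    have h2b : (0:ℝ) ≤ 2 ^ b := rpow_nonneg (by norm_num) _
    have := mul_le_mul habs1 hpow (rpow_nonneg (by linarith) _) (by positivity)
    refine this.trans (le_of_eq ?_)
    rw [abs_of_nonneg (by positivity : (0:ℝ) ≤ (t ^ (α-1) + 1) * 2 ^ b)]
  · -- on [1/2, 1]
    set C : ℝ := |α - 1| * 2 ^ |α - 2| with hC
    have hC0 : 0 ≤ C := by positivity
    have hlip : ∀ t ∈ Set.Icc (1/2:ℝ) 1, |t ^ (α-1) - 1| ≤ C * (1 - t) := by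
      intro t ht
      have key := Convex.norm_image_sub_le_of_norm_hasDerivWithin_le
        (f := fun s : ℝ => s ^ (α-1)) (f' := fun s : ℝ => (α-1) * s ^ (α-2))
        (s := Set.Icc (1/2:ℝ) 1) (C := C) ?hd ?hbound (convex_Icc _ _) ht
        (Set.right_mem_Icc.mpr (by norm_num))
      · simp only [Real.one_rpow] at key
        rw [show |t ^ (α-1) - 1| = ‖(1:ℝ) - t ^ (α-1)‖ by rw [Real.norm_eq_abs, abs_sub_comm]]
        refine key.trans (le_of_eq ?_)
        rw [Real.norm_eq_abs, abs_of_nonneg (by linarith [ht.2] : (0:ℝ) ≤ 1 - t)]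
      case hd =>
        intro s hs
        have hs0 : (0:ℝ) < s := by have := hs.1; linarith
        have := Real.hasDerivAt_rpow_const (x := s) (p := α - 1) (Or.inl hs0.ne')
        have h : α - 1 - 1 = α - 2 := by ring
        rw [h] at this
        exact this.hasDerivWithinAt
      case hbound =>
        intro s hs
        have hs0 : (0:ℝ) < s := by have := hs.1; linarith
        rw [Real.norm_eq_abs, abs_mul]
        apply mul_le_mul_of_nonneg_left _ (abs_nonneg _)
        rw [abs_of_nonneg (rpow_nonneg hs0.le _)]
        rw [Real.rpow_def_of_pos hs0, Real.rpow_def_of_pos (by norm_num : (0:ℝ) < 2)]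
        apply Real.exp_le_exp.mpr
        have hlt : |Real.log s| ≤ Real.log 2 := by
          rw [abs_le]
          constructor
          · have : Real.log (1/2) ≤ Real.log s :=
              Real.log_le_log (by norm_num) hs.1
            rw [one_div, Real.log_inv] at this
            linarith
          · have h0 : Real.log s ≤ 0 := Real.log_nonpos (by linarith [hs.1]) hs.2
            linarith [Real.log_nonneg (by norm_num : (1:ℝ) ≤ 2)]
        calc Real.log s * (α - 2) ≤ |Real.log s * (α-2)| := le_abs_self _
          _ = |Real.log s| * |α - 2| := abs_mul _ _
          _ ≤ Real.log 2 * |α - 2| := by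
              apply mul_le_mul_of_nonneg_right hlt (abs_nonneg _)
    have hmaj : IntegrableOn (fun t : ℝ => C * (1-t) ^ (1-b)) (Set.Icc (1/2) 1) := by
      rw [integrableOn_Icc_iff_integrableOn_Ioc]
      have h1 : IntervalIntegrable (fun u : ℝ => u ^ (1-b)) volume 0 (1/2) :=
        intervalIntegral.intervalIntegrable_rpow' (by linarith)
      have h2 := h1.comp_sub_left 1
      have h3 : IntervalIntegrable (fun t : ℝ => (1 - t) ^ (1-b)) volume (1/2) 1 := by
        have h4 : IntervalIntegrable (fun t : ℝ => (1 - t) ^ (1-b)) volume 1 (1/2) := by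
          have e1 : (1:ℝ) - 0 = 1 := by norm_num
          have e2 : (1:ℝ) - 1/2 = 1/2 := by norm_num
          rw [e1, e2] at h2
          exact h2
        exact h4.symm
      exact (((intervalIntegrable_iff_integrableOn_Ioc_of_le (by norm_num : (1:ℝ)/2 ≤ 1)).mp h3).const_mul C)
    apply hmaj.integrable.mono hmeas.aestronglyMeasurable
    rw [ae_restrict_iff' measurableSet_Icc]
    apply Filter.Eventually.of_forall
    intro t ht
    have h1t : (0:ℝ) ≤ 1 - t := by linarith [ht.2]
    have hpow0 : (0:ℝ) ≤ (1-t) ^ (-b) := rpow_nonneg h1t _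
    rw [Real.norm_eq_abs, Real.norm_eq_abs, abs_mul, abs_of_nonneg hpow0]
    have key : (1 - t) * (1-t) ^ (-b) = (1-t) ^ (1-b) := by
      rcases eq_or_lt_of_le h1t with h | h
      · rw [← h, Real.zero_rpow (by linarith), Real.zero_rpow (by linarith), mul_zero]
      · rw [show (1:ℝ)-b = 1 + (-b) by ring, Real.rpow_add h, Real.rpow_one]
    have := mul_le_mul_of_nonneg_right (hlip t ht) hpow0
    rw [mul_assoc, key] at this
    refine this.trans (le_of_eq ?_)
    rw [abs_of_nonneg (by positivity : (0:ℝ) ≤ C * (1-t) ^ (1-b))]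

lemma keyG {α b : ℝ} (hα : 0 < α) (hb1 : 1 < b) (hb2 : b < 2) :
    Filter.Tendsto (fun x : ℝ => (1-x) ^ (b-1) * ∫ t in Set.Ioc (0:ℝ) x, t ^ (α-1) * (1-t) ^ (-b))
      (nhdsWithin 1 (Set.Ioo 0 1)) (nhds (1/(b-1))) := by
  have hb1' : b - 1 ≠ 0 := by intro hc; apply absurd hc; intro h; linarith [hc]
  have hbne : b - 1 ≠ 0 := sub_ne_zero.mpr (by linarith : b ≠ 1)
  set h : ℝ → ℝ := fun t : ℝ => (t ^ (α-1) - 1) * (1-t) ^ (-b) with hh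
  have hInt := h_integrable hα hb1 hb2
  set H : ℝ → ℝ := fun x => ∫ t in Set.Ioc (0:ℝ) x, h t with hH
  have hHcont : ContinuousOn H (Set.Icc 0 1) := intervalIntegral.continuousOn_primitive hInt
  have T2 : Filter.Tendsto H (nhdsWithin 1 (Set.Ioo 0 1)) (nhds (H 1)) :=
    (hHcont 1 (by norm_num)).mono_left (nhdsWithin_mono 1 Set.Ioo_subset_Icc_self)
  have T1 : Filter.Tendsto (fun x : ℝ => (1-x) ^ (b-1)) (nhdsWithin 1 (Set.Ioo 0 1)) (nhds 0) := by
    have c1 : ContinuousAt (fun u : ℝ => u ^ (b-1)) 0 :=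
      Real.continuousAt_rpow_const 0 (b-1) (Or.inr (by linarith))
    have c2 : Filter.Tendsto (fun x : ℝ => 1 - x) (nhds 1) (nhds 0) := by
      have : Continuous (fun x : ℝ => 1 - x) := continuous_const.sub continuous_id
      have h2 := this.tendsto (1:ℝ)
      simpa using h2
    have := c1.tendsto.comp c2
    rw [Real.zero_rpow (by linarith : b - 1 ≠ 0)] at this
    exact this.mono_left nhdsWithin_le_nhds
  have Tc : Filter.Tendsto (fun _ : ℝ => (1:ℝ)) (nhdsWithin 1 (Set.Ioo (0:ℝ) 1)) (nhds 1) :=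
    tendsto_const_nhds
  have comb := (T1.mul T2).add ((Tc.sub T1).div_const (b-1))
  have hval : (0 : ℝ) * H 1 + ((1:ℝ) - 0)/(b-1) = 1/(b-1) := by ring
  rw [hval] at comb
  apply comb.congr'
  filter_upwards [eventually_mem_nhdsWithin] with x hx
  obtain ⟨hx0, hx1⟩ := hx
  have h1x : (0:ℝ) < 1 - x := by linarith
  have hi1 : IntegrableOn h (Set.Ioc 0 x) :=
    hInt.mono_set (fun t ht => ⟨ht.1.le, ht.2.trans hx1.le⟩)
  have hi2 : IntegrableOn (fun t : ℝ => (1-t) ^ (-b)) (Set.Ioc 0 x) := by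
    have hcont : ContinuousOn (fun t : ℝ => (1-t) ^ (-b)) (Set.Icc 0 x) := by
      apply ContinuousOn.rpow_const ((continuous_const.sub continuous_id).continuousOn)
      intro t ht
      left
      have h2 : t ≤ x := ht.2
      simp only [Pi.sub_apply, id_eq]
      intro hc; nlinarith [hc]
    exact (hcont.integrableOn_Icc).mono_set Set.Ioc_subset_Icc_self
  have hsplit : (∫ t in Set.Ioc (0:ℝ) x, t ^ (α-1) * (1-t) ^ (-b))
      = H x + ((1-x) ^ (1-b) - 1)/(b-1) := by
    have hfun : (fun t : ℝ => t ^ (α-1) * (1-t) ^ (-b))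
        = fun t : ℝ => h t + (1-t) ^ (-b) := by
      funext t; rw [hh]; ring
    rw [hfun, MeasureTheory.integral_add hi1 hi2, hH]
    congr 1
    have hIoc : (∫ t in Set.Ioc (0:ℝ) x, (1-t) ^ (-b)) = ∫ t in (0:ℝ)..x, (1-t) ^ (-b) :=
      (intervalIntegral.integral_of_le hx0.le).symm
    rw [hIoc]
    have hcomp := intervalIntegral.integral_comp_sub_left (a := (0:ℝ)) (b := x)
      (fun u : ℝ => u ^ (-b)) 1
    rw [hcomp]
    have hzero : (0:ℝ) ∉ Set.uIcc (1-x) (1-0) := by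
      rw [Set.mem_uIcc]
      push_neg
      constructor <;> intro h' <;> nlinarith [h']
    rw [integral_rpow (Or.inr ⟨by intro hc; nlinarith [hc], hzero⟩)]
    have e1 : (1:ℝ) - 0 = 1 := by norm_num
    rw [e1, Real.one_rpow]
    have e2 : -b + 1 = 1 - b := by ring
    rw [e2, div_eq_div_iff (by intro hc; nlinarith [hc] : (1:ℝ)-b ≠ 0) (by intro hc; nlinarith [hc] : b-(1:ℝ) ≠ 0)]
    ring
  have hmulinv : (1-x) ^ (b-1) * (1-x) ^ (1-b) = 1 := by
    rw [← Real.rpow_add h1x, show b-1+(1-b) = (0:ℝ) by ring, Real.rpow_zero]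
  rw [hsplit, mul_add, ← mul_div_assoc, mul_sub, hmulinv, mul_one]

lemma keyK {α b : ℝ} (hα : 0 < α) (hb1 : 1 < b) (hb2 : b < 3/2) :
    Filter.Tendsto (fun x : ℝ => (1-x) ^ (b-1) * ∑' n : ℕ, (α / (α + n)) * bc b n * x ^ n)
      (nhdsWithin 1 (Set.Ioo 0 1)) (nhds (α/(b-1))) := by
  have hkg := keyG hα hb1 (by linarith)
  have hx_inv : Filter.Tendsto (fun x : ℝ => x ^ (-α)) (nhdsWithin 1 (Set.Ioo 0 1)) (nhds 1) := by
    have := (Real.continuousAt_rpow_const 1 (-α) (Or.inl one_ne_zero)).tendsto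
    rw [Real.one_rpow] at this
    exact this.mono_left nhdsWithin_le_nhds
  have comb := hx_inv.mul (hkg.const_mul α)
  have hval : (1:ℝ) * (α * (1/(b-1))) = α/(b-1) := by ring
  rw [hval] at comb
  apply comb.congr'
  filter_upwards [eventually_mem_nhdsWithin] with x hx
  obtain ⟨hx0, hx1⟩ := hx
  have hseq := series_eq_integral hα (by linarith : (0:ℝ) ≤ b) (by linarith) hx0 hx1
  have hicongr : (∫ t in Set.Ioc (0:ℝ) x, t ^ (α-1) * ∑' n : ℕ, bc b n * t ^ n)
      = ∫ t in Set.Ioc (0:ℝ) x, t ^ (α-1) * (1-t) ^ (-b) := by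
    apply MeasureTheory.setIntegral_congr_fun measurableSet_Ioc
    intro t ht
    simp only
    rw [binom (by linarith) (by linarith) ht.1.le (lt_of_le_of_lt ht.2 hx1)]
  rw [hicongr] at hseq
  have hxα : (0:ℝ) < x ^ α := rpow_pos_of_pos hx0 α
  have hxinv : x ^ (-α) * x ^ α = 1 := by
    rw [← Real.rpow_add hx0, neg_add_cancel, Real.rpow_zero]
  have hS : (∑' n : ℕ, (α / (α + n)) * bc b n * x ^ n)
      = x ^ (-α) * (α * ∫ t in Set.Ioc (0:ℝ) x, t ^ (α-1) * (1-t) ^ (-b)) := by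
    rw [← hseq, ← mul_assoc, hxinv, one_mul]
  rw [hS]
  ring

lemma rpow_fact {M z : ℝ} (hz : 1 < z) :
    z ^ (M - 1/2) = (2*z/(z+1)) ^ (2*M-1) * (1 - ((z-1)/(z+1))^2) ^ ((3/2 - M) - 1) := by
  have hz0 : (0:ℝ) < z := by linarith
  have hz1 : (0:ℝ) < z + 1 := by linarith
  set u : ℝ := 2*z/(z+1) with hu
  have hu0 : 0 < u := by rw [hu]; positivity
  have hzeta : 1 - ((z-1)/(z+1))^2 = u^2/z := by
    rw [hu]; field_simp; ring
  rw [hzeta]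
  have e1 : (3/2 - M) - 1 = 1/2 - M := by ring
  rw [e1, Real.div_rpow (by positivity) hz0.le]
  have e2 : (u^2 : ℝ) = u ^ ((2:ℕ) : ℝ) := by rw [Real.rpow_natCast]
  rw [e2, ← Real.rpow_mul hu0.le, ← mul_div_assoc, ← Real.rpow_add hu0]
  have e3 : 2*M - 1 + ((2:ℕ):ℝ) * (1/2 - M) = 0 := by push_cast; ring
  rw [e3, Real.rpow_zero]
  rw [eq_div_iff (rpow_pos_of_pos hz0 _).ne', ← Real.rpow_add hz0]
  have e4 : M - 1/2 + (1/2 - M) = 0 := by ring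
  rw [e4, Real.rpow_zero]

/-- Gauss hypergeometric function ₂F₁ (real version), as a power series. -/
noncomputable def hypR (a b c x : ℝ) : ℝ :=
  ∑' n : ℕ, (∏ k ∈ Finset.range n, ((a + k) * (b + k) / ((c + k) * (k + 1)))) * x ^ n

theorem stmt11 (a M : ℝ) (ha : a > -1) (hM0 : 0 < M) (hM : M < 1/2) :
    Tendsto (fun z : ℝ => z ^ (M - 1/2) *
        hypR ((a + 1) / 2) (3/2 - M) ((a + 3) / 2) (((z - 1) / (z + 1)) ^ 2))
      atTop (nhds ((2 : ℝ) ^ (2 * M - 1) * (1 + a) / (1 - 2 * M))) := by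
  have hα : (0:ℝ) < (a+1)/2 := by linarith
  have key := keyK (α := (a+1)/2) (b := 3/2 - M) hα (by linarith) (by linarith)
  have hhyp : ∀ x : ℝ, hypR ((a + 1) / 2) (3/2 - M) ((a + 3) / 2) x
      = ∑' n : ℕ, (((a+1)/2)/((a+1)/2 + ↑n)) * bc (3/2 - M) n * x ^ n := by
    intro x
    unfold hypR
    apply tsum_congr; intro n
    rw [← coeff_eq hα n]
    congr 1
    apply Finset.prod_congr rfl
    intro k _
    have e : (a+3)/2 = (a+1)/2 + 1 := by ring
    rw [e]
  have hζ : Filter.Tendsto (fun z : ℝ => ((z-1)/(z+1))^2) Filter.atTop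
      (nhdsWithin 1 (Set.Ioo (0:ℝ) 1)) := by
    rw [tendsto_nhdsWithin_iff]
    constructor
    · have h3 : Filter.Tendsto (fun z : ℝ => (2:ℝ)/(z+1)) Filter.atTop (nhds 0) :=
        Filter.Tendsto.div_atTop tendsto_const_nhds
          (Filter.tendsto_atTop_add_const_right _ 1 Filter.tendsto_id)
      have h2 : Filter.Tendsto (fun z : ℝ => 1 - 2/(z+1)) Filter.atTop (nhds 1) := by
        have h4 : Filter.Tendsto (fun _ : ℝ => (1:ℝ)) Filter.atTop (nhds 1) := tendsto_const_nhds
        have := h4.sub h3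
        simpa using this
      have h1 : Filter.Tendsto (fun z : ℝ => (z-1)/(z+1)) Filter.atTop (nhds 1) := by
        apply h2.congr'
        filter_upwards [Filter.eventually_gt_atTop (0:ℝ)] with z hz
        have : z + 1 ≠ 0 := by linarith
        field_simp
        ring
      have := h1.pow 2
      norm_num at this
      exact this
    · filter_upwards [Filter.eventually_gt_atTop (1:ℝ)] with z hz
      have hz1 : (0:ℝ) < z + 1 := by linarith
      have q0 : 0 < (z-1)/(z+1) := div_pos (by linarith) hz1
      have q1 : (z-1)/(z+1) < 1 := by rw [div_lt_one hz1]; linarith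
      constructor
      · positivity
      · nlinarith [q0, q1]
  have hcomp := key.comp hζ
  have hufac : Filter.Tendsto (fun z : ℝ => (2*z/(z+1)) ^ (2*M-1)) Filter.atTop
      (nhds ((2:ℝ) ^ (2*M-1))) := by
    have h3 : Filter.Tendsto (fun z : ℝ => (2:ℝ)/(z+1)) Filter.atTop (nhds 0) :=
      Filter.Tendsto.div_atTop tendsto_const_nhds
        (Filter.tendsto_atTop_add_const_right _ 1 Filter.tendsto_id)
    have h4 : Filter.Tendsto (fun _ : ℝ => (2:ℝ)) Filter.atTop (nhds 2) := tendsto_const_nhds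
    have h2 : Filter.Tendsto (fun z : ℝ => 2 - 2/(z+1)) Filter.atTop (nhds 2) := by
      have := h4.sub h3
      simpa using this
    have h1 : Filter.Tendsto (fun z : ℝ => 2*z/(z+1)) Filter.atTop (nhds 2) := by
      apply h2.congr'
      filter_upwards [Filter.eventually_gt_atTop (0:ℝ)] with z hz
      have : z + 1 ≠ 0 := by linarith
      field_simp
      ring
    have hc := (Real.continuousAt_rpow_const 2 (2*M-1) (Or.inl two_ne_zero)).tendsto
    exact hc.comp h1
  have total := hufac.mul hcomp
  have hval : (2:ℝ)^(2*M-1) * ((a+1)/2/((3/2-M)-1)) = 2^(2*M-1)*(1+a)/(1-2*M) := by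
    have h1 : (3/2 - M) - 1 = 1/2 - M := by ring
    rw [h1]
    have h4 : (a+1)/2/((1:ℝ)/2 - M) = (1+a)/(1-2*M) := by
      rw [div_div]
      have h5 : 2*((1:ℝ)/2 - M) = 1 - 2*M := by ring
      rw [h5]
      congr 1
      ring
    rw [h4, mul_div_assoc]
  rw [hval] at total
  apply total.congr'
  filter_upwards [Filter.eventually_gt_atTop (1:ℝ)] with z hz
  simp only [Function.comp_apply]
  rw [hhyp, rpow_fact hz (M := M)]
  ring
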